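/- Let n ≥ 4 be an even integer and let Ω be an n×n real skew-symmetric matrix (Ωᵀ = −Ω). Set H = Ω·Ωᵀ. Then tr(H³) − (1/2 + 2/n)·tr(H)·tr(H²) + (1/(2n) + 1/n²)·(tr H)³ = 0 if and only if H is a scalar matrix, i.e., H = ((tr H)/n)·I_n. -/

import Mathlib

open Matrix Finset

private lemma sum_key_aux (n : ℕ) (hn : 4 ≤ n) (d : Fin n → ℝ) (hpos : ∀ i, 0 ≤ d i)
    (hbound : ∀ i, 2 * d i ≤ ∑ j, d j) :
    ((∑ i, (d i)^3) - (1/2 + 2/(n:ℝ)) * (∑ i, d i) * (∑ i, (d i)^2)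
      + (1/(2*(n:ℝ)) + 1/(n:ℝ)^2) * (∑ i, d i)^3 = 0)
    ↔ ∀ i, d i = (∑ j, d j)/(n:ℝ) := by
  have hn0 : (n:ℝ) ≠ 0 := by positivity
  set s : ℝ := ∑ j, d j with hs
  have hsnn : 0 ≤ s := Finset.sum_nonneg fun i _ => hpos i
  have hid : (∑ i, (d i)^3) - (1/2 + 2/(n:ℝ)) * s * (∑ i, (d i)^2)
      + (1/(2*(n:ℝ)) + 1/(n:ℝ)^2) * s^3
      = ∑ i, (d i - s/n)^2 * (d i - s/2) := by
    have expand : ∀ i, (d i - s/n)^2 * (d i - s/2)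
        = (d i)^3 - (2*(s/n)+s/2) * (d i)^2 + ((s/n)^2 + (s/n)*s) * d i
          - (s/n)^2*(s/2) := by intro i; ring
    rw [Finset.sum_congr rfl (fun i _ => expand i)]
    simp only [Finset.sum_sub_distrib, Finset.sum_add_distrib, ← Finset.mul_sum,
      Finset.sum_const, Finset.card_univ, Fintype.card_fin, nsmul_eq_mul, ← hs]
    field_simp
    ring
  rw [hid]
  have hterm : ∀ i ∈ Finset.univ, (d i - s/n)^2 * (d i - s/2) ≤ 0 := by
    intro i _
    apply mul_nonpos_of_nonneg_of_nonpos (by positivity)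
    nlinarith [hbound i]
  constructor
  · intro h i
    have hall := (Finset.sum_eq_zero_iff_of_nonpos hterm).mp h
    have hge : ∀ i, s/n ≤ d i := by
      intro i
      rcases mul_eq_zero.mp (hall i (Finset.mem_univ i)) with h1 | h2
      · have : d i - s/n = 0 := by
          have := sq_eq_zero_iff.mp h1; linarith
        linarith
      · have : d i = s/2 := by linarith
        rw [this]
        rw [div_le_div_iff₀ (by positivity) (by norm_num)]
        nlinarith [hsnn, (show (4:ℝ) ≤ n by exact_mod_cast hn)]
    have hsum0 : ∑ i, (d i - s/n) = 0 := by
      simp [Finset.sum_sub_distrib, ← hs, Finset.card_univ]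
      field_simp
      ring
    have := (Finset.sum_eq_zero_iff_of_nonneg (fun i _ => by linarith [hge i])).mp hsum0
    have := this i (Finset.mem_univ i)
    linarith
  · intro h
    apply Finset.sum_eq_zero
    intro i _
    rw [h i]
    ring

theorem stmt_8 (n : ℕ) (hn : 4 ≤ n) (hne : Even n)
    (Ω : Matrix (Fin n) (Fin n) ℝ) (hskew : Ωᵀ = -Ω) :
    ((Ω * Ωᵀ * (Ω * Ωᵀ) * (Ω * Ωᵀ)).trace
      - (1 / 2 + 2 / (n : ℝ)) * (Ω * Ωᵀ).trace * (Ω * Ωᵀ * (Ω * Ωᵀ)).trace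
      + (1 / (2 * (n : ℝ)) + 1 / (n : ℝ) ^ 2) * (Ω * Ωᵀ).trace ^ 3 = 0)
      ↔ Ω * Ωᵀ = ((Ω * Ωᵀ).trace / (n : ℝ)) • (1 : Matrix (Fin n) (Fin n) ℝ) := by
  have hn0 : (n:ℝ) ≠ 0 := by positivity
  have hH : (Ω * Ωᵀ).IsHermitian := by
    have : (Ω * Ωᵀ)ᴴ = Ω * Ωᵀ := by
      show (Ω * Ωᵀ)ᵀ = _
      rw [Matrix.transpose_mul, Matrix.transpose_transpose]
    exact this
  set U : Matrix (Fin n) (Fin n) ℝ := (hH.eigenvectorUnitary : Matrix (Fin n) (Fin n) ℝ) with hU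
  set d : Fin n → ℝ := hH.eigenvalues with hd
  have hUU : U * Uᵀ = 1 := (Matrix.mem_unitaryGroup_iff).mp (hH.eigenvectorUnitary).2
  have hUU' : Uᵀ * U = 1 := (Matrix.mem_unitaryGroup_iff').mp (hH.eigenvectorUnitary).2
  have hspec : Ω * Ωᵀ = U * diagonal d * Uᵀ := by
    have := hH.spectral_theorem
    simpa [RCLike.ofReal_real_eq_id, hU, hd, Matrix.star_eq_conjTranspose,
      Matrix.conjTranspose_eq_transpose_of_trivial] using this
  set A : Matrix (Fin n) (Fin n) ℝ := Uᵀ * Ω * U with hA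
  have hAskew : Aᵀ = -A := by
    rw [hA, Matrix.transpose_mul, Matrix.transpose_mul, Matrix.transpose_transpose, hskew]
    simp [Matrix.mul_assoc, Matrix.neg_mul, Matrix.mul_neg]
  have hAD : A * Aᵀ = diagonal d := by
    rw [hA, Matrix.transpose_mul, Matrix.transpose_mul, Matrix.transpose_transpose]
    calc Uᵀ * Ω * U * (Uᵀ * (Ωᵀ * U)) = Uᵀ * (Ω * (U * Uᵀ) * Ωᵀ) * U := by
          simp [Matrix.mul_assoc]
      _ = Uᵀ * (Ω * Ωᵀ) * U := by rw [hUU]; simp [Matrix.mul_assoc]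
      _ = diagonal d := by
          rw [hspec]
          calc Uᵀ * (U * diagonal d * Uᵀ) * U = (Uᵀ * U) * diagonal d * (Uᵀ * U) := by
                simp [Matrix.mul_assoc]
            _ = diagonal d := by rw [hUU']; simp
  have hAD' : Aᵀ * A = diagonal d := by
    have : Aᵀ * A = A * Aᵀ := by rw [hAskew]; simp [Matrix.neg_mul, Matrix.mul_neg]
    rw [this, hAD]
  have hAii : ∀ i, A i i = 0 := by
    intro i
    have := congrFun (congrFun hAskew i) i
    simp [Matrix.transpose_apply] at this
    linarith
  have hrow : ∀ i, d i = ∑ j, (A i j)^2 := by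
    intro i
    have := congrFun (congrFun hAD i) i
    simp [Matrix.mul_apply, Matrix.transpose_apply, diagonal] at this
    rw [← this]
    exact Finset.sum_congr rfl fun j _ => (sq (A i j)).symm
  have hcol : ∀ i, d i = ∑ j, (A j i)^2 := by
    intro i
    have := congrFun (congrFun hAD' i) i
    simp [Matrix.mul_apply, Matrix.transpose_apply, diagonal] at this
    rw [← this]
    exact Finset.sum_congr rfl fun j _ => (sq (A j i)).symm
  have hpos : ∀ i, 0 ≤ d i := by
    intro i; rw [hrow i]; positivity
  -- total sum
  have hsum : ∑ i, d i = ∑ i, ∑ j, (A i j)^2 :=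
    Finset.sum_congr rfl fun i _ => hrow i
  have hbound : ∀ i, 2 * d i ≤ ∑ j, d j := by
    intro i
    rw [hsum]
    have h1 : ∑ j, (A i j)^2 + ∑ j ∈ Finset.univ.erase i, ∑ k, (A j k)^2
        = ∑ j, ∑ k, (A j k)^2 :=
      Finset.add_sum_erase _ (fun j => ∑ k, (A j k)^2) (Finset.mem_univ i)
    have h2 : ∀ j ∈ Finset.univ.erase i, (A j i)^2 ≤ ∑ k, (A j k)^2 := by
      intro j _
      exact Finset.single_le_sum (fun k _ => sq_nonneg (A j k)) (Finset.mem_univ i)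
    have h3 : ∑ j ∈ Finset.univ.erase i, (A j i)^2
        ≤ ∑ j ∈ Finset.univ.erase i, ∑ k, (A j k)^2 := Finset.sum_le_sum h2
    have h4 : ∑ j ∈ Finset.univ.erase i, (A j i)^2 = ∑ j, (A j i)^2 :=
      Finset.sum_erase _ (by rw [hAii i]; ring)
    have := hrow i
    have := hcol i
    nlinarith [h3]
  -- traces of powers
  have htr1 : (Ω * Ωᵀ).trace = ∑ i, d i := by
    rw [hspec, Matrix.trace_mul_cycle, hUU', Matrix.one_mul, Matrix.trace_diagonal]
  have hsq : (Ω * Ωᵀ) * (Ω * Ωᵀ) = U * diagonal (fun i => (d i)^2) * Uᵀ := by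
    rw [hspec]
    calc (U * diagonal d * Uᵀ) * (U * diagonal d * Uᵀ)
        = U * (diagonal d * (Uᵀ * U) * diagonal d) * Uᵀ := by simp [Matrix.mul_assoc]
      _ = U * (diagonal d * diagonal d) * Uᵀ := by rw [hUU']; simp [Matrix.mul_assoc]
      _ = U * diagonal (fun i => (d i)^2) * Uᵀ := by
          have hdd : diagonal d * diagonal d = diagonal (fun i => (d i)^2) := by
            rw [Matrix.diagonal_mul_diagonal]; congr 1; funext i; ring
          rw [hdd]
  have htr2 : ((Ω * Ωᵀ) * (Ω * Ωᵀ)).trace = ∑ i, (d i)^2 := by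
    rw [hsq, Matrix.trace_mul_cycle, hUU', Matrix.one_mul, Matrix.trace_diagonal]
  have hcube : (Ω * Ωᵀ) * (Ω * Ωᵀ) * (Ω * Ωᵀ) = U * diagonal (fun i => (d i)^3) * Uᵀ := by
    rw [hsq, hspec]
    calc (U * diagonal (fun i => (d i)^2) * Uᵀ) * (U * diagonal d * Uᵀ)
        = U * (diagonal (fun i => (d i)^2) * (Uᵀ * U) * diagonal d) * Uᵀ := by
          simp [Matrix.mul_assoc]
      _ = U * (diagonal (fun i => (d i)^2) * diagonal d) * Uᵀ := by
          rw [hUU']; simp [Matrix.mul_assoc]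
      _ = U * diagonal (fun i => (d i)^3) * Uᵀ := by
          have hdd : diagonal (fun i => (d i)^2) * diagonal d = diagonal (fun i => (d i)^3) := by
            rw [Matrix.diagonal_mul_diagonal]
            exact congrArg _ (funext fun i => by ring)
          rw [hdd]
  have htr3 : ((Ω * Ωᵀ) * (Ω * Ωᵀ) * (Ω * Ωᵀ)).trace = ∑ i, (d i)^3 := by
    rw [hcube, Matrix.trace_mul_cycle, hUU', Matrix.one_mul, Matrix.trace_diagonal]
  rw [htr1, htr2, htr3]
  rw [sum_key_aux n hn d hpos hbound]
  constructor
  · intro h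
    rw [hspec]
    have : diagonal d = ((∑ j, d j)/(n:ℝ)) • (1 : Matrix (Fin n) (Fin n) ℝ) := by
      ext i j
      rcases eq_or_ne i j with rfl | hij
      · simp [h i]
      · simp [Matrix.diagonal_apply_ne _ hij, Matrix.one_apply_ne hij]
    rw [this, Matrix.mul_smul, Matrix.smul_mul, Matrix.mul_one, hUU]
  · intro h i
    have hdiagonal : diagonal d = ((∑ j, d j)/(n:ℝ)) • (1 : Matrix (Fin n) (Fin n) ℝ) := by
      have h1 : Uᵀ * (Ω * Ωᵀ) * U = diagonal d := by
        rw [hspec]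
        calc Uᵀ * (U * diagonal d * Uᵀ) * U = (Uᵀ * U) * diagonal d * (Uᵀ * U) := by
              simp [Matrix.mul_assoc]
          _ = diagonal d := by rw [hUU']; simp
      rw [← h1, h, Matrix.mul_smul, Matrix.smul_mul, Matrix.mul_one, hUU']
    have := congrFun (congrFun hdiagonal i) i
    simpa [Matrix.diagonal_apply_eq, Matrix.smul_apply, Matrix.one_apply_eq] using this
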